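/- Let L be a topological group, U a compact open subgroup of L, D a dense subgroup of L, and H a subgroup of L with D ∩ U ⊆ H ⊆ D such that the index [H : D ∩ U] is finite. Then the closure of H in L is a compact open subgroup of L, and the map h·(D ∩ U) ↦ h·U induces a bijection from the left coset space H/(D ∩ U) onto (closure of H)/U; in particular the index of U in the closure of H equals [H : D ∩ U]. -/

import Mathlib

open scoped Pointwise

/-- Let `L` be a topological group, `U` a compact open subgroup, `D` a dense
subgroup, and `H` a subgroup with `D ⊓ U ≤ H ≤ D` of finite index `[H : D ⊓ U]`.  Then the
closure of `H` is a compact open subgroup of `L`, the map `h (D ⊓ U) ↦ h U` induces a bijection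
`H/(D ⊓ U) ≃ (closure H)/U` (injectivity and surjectivity stated concretely), and in particular
the index of `U` in the closure of `H` equals `[H : D ⊓ U]`. -/
theorem stmt_0 {L : Type*} [Group L] [TopologicalSpace L] [IsTopologicalGroup L]
    (U D H : Subgroup L)
    (hUc : IsCompact (U : Set L)) (hUo : IsOpen (U : Set L))
    (hD : Dense (D : Set L)) (hDUH : D ⊓ U ≤ H) (hHD : H ≤ D)
    (hfin : ((D ⊓ U).subgroupOf H).index ≠ 0) :
    IsCompact (H.topologicalClosure : Set L) ∧ IsOpen (H.topologicalClosure : Set L) ∧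
    (∀ h h' : L, h ∈ H → h' ∈ H → (h⁻¹ * h' ∈ U ↔ h⁻¹ * h' ∈ D ⊓ U)) ∧
    (∀ w : L, w ∈ H.topologicalClosure → ∃ h ∈ H, h⁻¹ * w ∈ U) ∧
    (U.subgroupOf H.topologicalClosure).index = ((D ⊓ U).subgroupOf H).index := by
  classical
  set C := H.topologicalClosure with hCdef
  have hHC : H ≤ C := Subgroup.le_topologicalClosure H
  have hCset : (C : Set L) = closure (H : Set L) := rfl
  have hUC : U ≤ C := by
    intro u hu
    have h1 : (U : Set L) ⊆ closure ((U : Set L) ∩ D) :=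
      hD.open_subset_closure_inter hUo
    have h2 : ((U : Set L) ∩ (D : Set L)) ⊆ (H : Set L) := by
      rintro x ⟨hxU, hxD⟩; exact hDUH ⟨hxD, hxU⟩
    have : u ∈ closure (H : Set L) := closure_mono h2 (h1 hu)
    exact this
  have hCopen : IsOpen (C : Set L) := Subgroup.isOpen_mono hUC hUo
  have key3 : ∀ h h' : L, h ∈ H → h' ∈ H → (h⁻¹ * h' ∈ U ↔ h⁻¹ * h' ∈ D ⊓ U) := by
    intro h h' hh hh'
    constructor
    · intro hu
      exact ⟨D.mul_mem (D.inv_mem (hHD hh)) (hHD hh'), hu⟩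
    · exact fun hx => hx.2
  have key4 : ∀ w : L, w ∈ C → ∃ h ∈ H, h⁻¹ * w ∈ U := by
    intro w hw
    have hw' : w ∈ closure (H : Set L) := hw
    rw [mem_closure_iff] at hw'
    obtain ⟨h, hh1, hh2⟩ := hw' ((fun x => w⁻¹ * x) ⁻¹' (U : Set L))
      (hUo.preimage (continuous_const.mul continuous_id)) (by simpa using U.one_mem)
    refine ⟨h, hh2, ?_⟩
    have hwu : w⁻¹ * h ∈ U := hh1
    simpa using U.inv_mem hwu
  have hQfin : Finite (H ⧸ (D ⊓ U).subgroupOf H) := Nat.finite_of_card_ne_zero hfin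
  have hcover : (C : Set L) ⊆
      ⋃ q : H ⧸ (D ⊓ U).subgroupOf H, ((Quotient.out q : H) : L) • (U : Set L) := by
    intro w hw
    obtain ⟨h, hhH, hhU⟩ := key4 w hw
    set q : H ⧸ (D ⊓ U).subgroupOf H := QuotientGroup.mk ⟨h, hhH⟩ with hq
    refine Set.mem_iUnion.2 ⟨q, ?_⟩
    have hout : (QuotientGroup.mk (Quotient.out q) : H ⧸ (D ⊓ U).subgroupOf H)
        = QuotientGroup.mk ⟨h, hhH⟩ := by
      rw [hq]; exact Quotient.out_eq _
    have hrel : (Quotient.out q)⁻¹ * (⟨h, hhH⟩ : H) ∈ (D ⊓ U).subgroupOf H :=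
      (QuotientGroup.eq).1 hout
    have hrel' : ((Quotient.out q : H) : L)⁻¹ * h ∈ U := by
      have := (Subgroup.mem_subgroupOf).1 hrel
      simpa using this.2
    rw [Set.mem_smul_set_iff_inv_smul_mem]
    have : ((Quotient.out q : H) : L)⁻¹ * w
        = (((Quotient.out q : H) : L)⁻¹ * h) * (h⁻¹ * w) := by group
    show ((Quotient.out q : H) : L)⁻¹ * w ∈ (U : Set L)
    rw [this]
    exact U.mul_mem hrel' hhU
  have hCclosed : IsClosed (C : Set L) := by rw [hCset]; exact isClosed_closure
  have hCcomp : IsCompact (C : Set L) := by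
    refine IsCompact.of_isClosed_subset ?_ hCclosed hcover
    exact isCompact_iUnion fun q => hUc.smul _
  refine ⟨hCcomp, hCopen, key3, key4, ?_⟩
  have e : (H ⧸ (D ⊓ U).subgroupOf H) ≃ (C ⧸ U.subgroupOf C) := by
    refine Equiv.ofBijective
      (Quotient.map' (fun h : H => (⟨(h : L), hHC h.2⟩ : C)) ?_) ⟨?_, ?_⟩
    · intro a b hab
      rw [QuotientGroup.leftRel_apply] at hab ⊢
      rw [Subgroup.mem_subgroupOf] at hab ⊢
      simpa using hab.2
    · intro x y
      refine Quotient.inductionOn₂' x y ?_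
      intro a b hab
      simp only [Quotient.map'_mk''] at hab
      have h1 : (⟨(a : L), hHC a.2⟩ : C)⁻¹ * ⟨(b : L), hHC b.2⟩ ∈ U.subgroupOf C :=
        (Quotient.eq'').1 hab |> QuotientGroup.leftRel_apply.1
      rw [Subgroup.mem_subgroupOf] at h1
      have hU' : (a : L)⁻¹ * b ∈ U := by simpa using h1
      have hDU : (a : L)⁻¹ * b ∈ D ⊓ U := (key3 _ _ a.2 b.2).1 hU'
      refine Quotient.sound' ?_
      rw [QuotientGroup.leftRel_apply, Subgroup.mem_subgroupOf]
      simpa using hDU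
    · intro y
      refine Quotient.inductionOn' y ?_
      intro w
      obtain ⟨h, hhH, hhU⟩ := key4 (w : L) w.2
      refine ⟨Quotient.mk'' ⟨h, hhH⟩, ?_⟩
      simp only [Quotient.map'_mk'']
      refine Quotient.sound' ?_
      rw [QuotientGroup.leftRel_apply, Subgroup.mem_subgroupOf]
      simpa using hhU
  rw [Subgroup.index, Subgroup.index]
  exact Nat.card_congr e.symm
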